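/- Let $k$ be a field and $Q \subset k[y,t]$ the $k$-subalgebra generated by $\{y^n - n y^{n+2} t : n \geq 1\}$ and $\{y^n t^m : n \geq 0, m \geq 2\}$. Then an element $f(y) + g(y)t + (\text{terms of degree} \geq 2 \text{ in } t)$ of $k[y,t]$ lies in $Q$ if and only if $g(y) = -y^3 f'(y)$. -/
import Mathlib

open Polynomial

section Aux

variable {k : Type*} [Field k]

private def sgen (k : Type*) [Field k] : Set (Polynomial (Polynomial k)) :=
  {q : Polynomial (Polynomial k) | ∃ n : ℕ, 1 ≤ n ∧
      q = C ((X : Polynomial k) ^ n) - (n : Polynomial (Polynomial k))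
            * C ((X : Polynomial k) ^ (n + 2)) * X} ∪
  {q : Polynomial (Polynomial k) | ∃ n m : ℕ, 2 ≤ m ∧
      q = C ((X : Polynomial k) ^ n) * X ^ m}

private lemma coeff_one_mul' (a b : Polynomial (Polynomial k)) :
    (a * b).coeff 1 = a.coeff 0 * b.coeff 1 + a.coeff 1 * b.coeff 0 := by
  rw [coeff_mul, Finset.Nat.sum_antidiagonal_eq_sum_range_succ_mk]
  simp [Finset.sum_range_succ]

private lemma deriv_pow_eq (n : ℕ) (hn : 1 ≤ n) :
    (C ((X : Polynomial k) ^ 3 * derivative ((X : Polynomial k) ^ n))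
        : Polynomial (Polynomial k))
      = (n : Polynomial (Polynomial k)) * C ((X : Polynomial k) ^ (n + 2)) := by
  have hx : (X : Polynomial k) ^ 3 * (C (n : k) * X ^ (n - 1))
      = C (n : k) * X ^ (n + 2) := by
    rw [mul_left_comm, ← pow_add, show 3 + (n - 1) = n + 2 by omega]
  rw [derivative_X_pow, hx, map_mul]
  simp [C_eq_natCast]

private lemma tm_mem (g : Polynomial k) {m : ℕ} (hm : 2 ≤ m) :
    C g * (X : Polynomial (Polynomial k)) ^ m ∈ Algebra.adjoin k (sgen k) := by
  induction g using Polynomial.induction_on' with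
  | add p q hp hq =>
      rw [map_add, add_mul]
      exact add_mem hp hq
  | monomial n c =>
      have h1 : (monomial n c : Polynomial k) = c • (X ^ n) := by
        rw [smul_eq_C_mul, C_mul_X_pow_eq_monomial]
      have h2 : (C (c • (X : Polynomial k) ^ n) : Polynomial (Polynomial k))
          = c • C ((X : Polynomial k) ^ n) := (smul_C c _).symm
      rw [h1, h2, smul_mul_assoc]
      refine Subalgebra.smul_mem _ (Algebra.subset_adjoin ?_) c
      exact Or.inr ⟨n, m, hm, rfl⟩

private lemma low_zero_mem (q : Polynomial (Polynomial k)) (h0 : q.coeff 0 = 0)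
    (h1 : q.coeff 1 = 0) : q ∈ Algebra.adjoin k (sgen k) := by
  rw [q.as_sum_support]
  refine Subalgebra.sum_mem _ fun n hn => ?_
  have hn2 : 2 ≤ n := by
    rcases Nat.lt_or_ge n 2 with h | h
    · interval_cases n <;> simp_all [mem_support_iff]
    · exact h
  rw [← C_mul_X_pow_eq_monomial]
  exact tm_mem _ hn2

private lemma phi_mem (f : Polynomial k) :
    C f - C ((X : Polynomial k) ^ 3 * derivative f) * X ∈ Algebra.adjoin k (sgen k) := by
  induction f using Polynomial.induction_on' with
  | add p q hp hq =>
      have : C (p + q) - C ((X : Polynomial k) ^ 3 * derivative (p + q)) * X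
          = (C p - C ((X : Polynomial k) ^ 3 * derivative p) * X)
            + (C q - C ((X : Polynomial k) ^ 3 * derivative q) * X) := by
        rw [derivative_add, mul_add, map_add, map_add, add_mul]; ring
      rw [this]; exact add_mem hp hq
  | monomial n c =>
      have h1 : (monomial n c : Polynomial k) = c • (X ^ n) := by
        rw [smul_eq_C_mul, C_mul_X_pow_eq_monomial]
      have key : C ((X : Polynomial k) ^ n) -
          C ((X : Polynomial k) ^ 3 * derivative ((X : Polynomial k) ^ n)) * X
          ∈ Algebra.adjoin k (sgen k) := by
        rcases Nat.eq_zero_or_pos n with rfl | hn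
        · simp only [pow_zero, derivative_one, mul_zero, map_zero, zero_mul, sub_zero, map_one]
          exact one_mem _
        · rw [deriv_pow_eq n hn]
          exact Algebra.subset_adjoin (Or.inl ⟨n, hn, rfl⟩)
      have h2 : (C (c • (X : Polynomial k) ^ n) : Polynomial (Polynomial k))
          = c • C ((X : Polynomial k) ^ n) := (smul_C c _).symm
      have h3 : (C ((X : Polynomial k) ^ 3 * (c • derivative ((X : Polynomial k) ^ n)))
          : Polynomial (Polynomial k))
          = c • C ((X : Polynomial k) ^ 3 * derivative ((X : Polynomial k) ^ n)) := by
        rw [mul_smul_comm]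
        exact (smul_C c _).symm
      rw [h1, derivative_smul, h2, h3, smul_mul_assoc, ← smul_sub]
      exact Subalgebra.smul_mem _ key c

end Aux

/-- Let `Q ⊂ k[y,t]` be the `k`-subalgebra generated by `{yⁿ - n yⁿ⁺² t : n ≥ 1}` and
`{yⁿ tᵐ : n ≥ 0, m ≥ 2}`. An element `f(y) + g(y)t + (t-degree ≥ 2 terms)` lies in `Q`
iff `g = -y³ f'`. Here `k[y,t]` is modelled as `(k[y])[t]`. -/
theorem stmt_7 (k : Type*) [Field k] :
    ∀ p : Polynomial (Polynomial k),
      p ∈ Algebra.adjoin k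
          ({q : Polynomial (Polynomial k) | ∃ n : ℕ, 1 ≤ n ∧
              q = C ((X : Polynomial k) ^ n) - (n : Polynomial (Polynomial k))
                    * C ((X : Polynomial k) ^ (n + 2)) * X} ∪
           {q : Polynomial (Polynomial k) | ∃ n m : ℕ, 2 ≤ m ∧
              q = C ((X : Polynomial k) ^ n) * X ^ m})
        ↔ p.coeff 1 = -((X : Polynomial k) ^ 3) * derivative (p.coeff 0) := by
  intro p
  constructor
  · intro hp
    let A : Subalgebra k (Polynomial (Polynomial k)) :=
      { carrier := {p : Polynomial (Polynomial k) |
          p.coeff 1 = -((X : Polynomial k) ^ 3) * derivative (p.coeff 0)}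
        add_mem' := by
          intro a b ha hb
          simp only [Set.mem_setOf_eq] at *
          simp [ha, hb, derivative_add, mul_add]
        mul_mem' := by
          intro a b ha hb
          simp only [Set.mem_setOf_eq] at *
          rw [coeff_one_mul', mul_coeff_zero, ha, hb, derivative_mul]
          ring
        one_mem' := by
          show (1 : Polynomial (Polynomial k)).coeff 1
            = -((X : Polynomial k) ^ 3) * derivative ((1 : Polynomial (Polynomial k)).coeff 0)
          simp [coeff_one]
        algebraMap_mem' := by
          intro r
          show (algebraMap k (Polynomial (Polynomial k)) r).coeff 1 = _
          simp only [Polynomial.algebraMap_apply]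
          simp }
    have hS : ({q : Polynomial (Polynomial k) | ∃ n : ℕ, 1 ≤ n ∧
              q = C ((X : Polynomial k) ^ n) - (n : Polynomial (Polynomial k))
                    * C ((X : Polynomial k) ^ (n + 2)) * X} ∪
           {q : Polynomial (Polynomial k) | ∃ n m : ℕ, 2 ≤ m ∧
              q = C ((X : Polynomial k) ^ n) * X ^ m}) ⊆ (A : Set (Polynomial (Polynomial k))) := by
      rintro q (⟨n, hn, rfl⟩ | ⟨n, m, hm, rfl⟩)
      · show _ = _
        rw [mul_assoc, show (n : Polynomial (Polynomial k)) * (C ((X : Polynomial k) ^ (n + 2)) * X)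
            = C ((X : Polynomial k) ^ 3 * derivative ((X : Polynomial k) ^ n)) * X by
          rw [deriv_pow_eq n hn, mul_assoc]]
        simp only [coeff_sub, coeff_C, coeff_C_mul, coeff_X_one, coeff_X_zero,
          mul_one, mul_zero, if_neg one_ne_zero, zero_sub, sub_zero]
        norm_num
      · show _ = _
        simp only [coeff_C_mul, coeff_X_pow]
        rw [if_neg (by omega), if_neg (by omega)]
        simp
    exact Algebra.adjoin_le hS hp
  · intro hp
    have h1 : C (p.coeff 0) - C ((X : Polynomial k) ^ 3 * derivative (p.coeff 0)) * X
        ∈ Algebra.adjoin k (sgen k) := phi_mem _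
    have h2 : p - (C (p.coeff 0) - C ((X : Polynomial k) ^ 3 * derivative (p.coeff 0)) * X)
        ∈ Algebra.adjoin k (sgen k) := by
      apply low_zero_mem
      · simp
      · rw [coeff_sub, coeff_sub, coeff_C, if_neg one_ne_zero, hp, coeff_C_mul,
          coeff_X_one, mul_one]
        ring
    have h3 := add_mem h1 h2
    rwa [add_sub_cancel] at h3
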